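/- Let 𝔤 = sl₂(ℂ) with Killing form K, ℒ(𝔤) = ℂ[t,t⁻¹] ⊗ 𝔤 the loop algebra, and K_ℒ the bilinear form on ℒ(𝔤) given by K_ℒ(tⁿ⊗X, tᵐ⊗Y) = δ_{n+m,0} K(X,Y). Let Y₀ ∈ sl₂ be the lower triangular matrix unit and define φ ∈ Hom(ℒ(𝔤), ℂ) by φ(tⁿ⊗X) = K(Y₀, X) for all n. Then there is no element Z ∈ ℒ(𝔤) such that K_ℒ(tⁿ⊗H₀, Z) = φ([tⁿ⊗H₀, 1⊗X₀]) for all n ∈ ℤ, where H₀ = diag(1,-1) and X₀ is the upper triangular matrix unit. Consequently the pentad (ℒ(𝔤), ad, ℒ(𝔤), Hom(ℒ(𝔤),ℂ), K_ℒ) admits no Φ-map. -/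

import Mathlib

set_option synthInstance.maxHeartbeats 1000000
set_option maxHeartbeats 1000000

open TensorProduct LaurentPolynomial

section Aux

open LieAlgebra.SpecialLinear

lemma mem_sl_iff' (A : Matrix (Fin 2) (Fin 2) ℂ) : A ∈ sl (Fin 2) ℂ ↔ A 0 0 + A 1 1 = 0 := by
  change A ∈ LinearMap.ker (Matrix.traceLinearMap (Fin 2) ℂ ℂ) ↔ _
  rw [LinearMap.mem_ker, Matrix.traceLinearMap_apply, Matrix.trace_fin_two]

noncomputable def slEquiv' : ↥(sl (Fin 2) ℂ) ≃ₗ[ℂ] (Fin 3 → ℂ) where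
  toFun A := ![A.val 0 0, A.val 0 1, A.val 1 0]
  map_add' A B := by
    funext i; fin_cases i <;> simp
  map_smul' c A := by
    have h : (↑(c • A) : Matrix (Fin 2) (Fin 2) ℂ) = c • A.val := rfl
    funext i; fin_cases i <;> simp [h]
  invFun c := ⟨!![c 0, c 1; c 2, -(c 0)], by rw [mem_sl_iff']; simp⟩
  left_inv A := by
    have ht : A.val 0 0 + A.val 1 1 = 0 := (mem_sl_iff' A.val).mp A.2
    apply Subtype.ext
    ext i j
    fin_cases i <;> fin_cases j <;> simp <;> linear_combination -ht
  right_inv c := by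
    funext i; fin_cases i <;> simp

noncomputable def slBasis' : Module.Basis (Fin 3) ℂ ↥(sl (Fin 2) ℂ) := Module.Basis.ofEquivFun slEquiv'

lemma killing_val (X Y : ↥(sl (Fin 2) ℂ))
    (hX : (X : Matrix (Fin 2) (Fin 2) ℂ) = !![0, 1; 0, 0])
    (hY : (Y : Matrix (Fin 2) (Fin 2) ℂ) = !![0, 0; 1, 0]) :
    killingForm ℂ ↥(sl (Fin 2) ℂ) Y X = 4 := by
  rw [show killingForm ℂ ↥(sl (Fin 2) ℂ) Y X
      = LinearMap.trace ℂ _ ((LieAlgebra.ad ℂ _ Y) ∘ₗ (LieAlgebra.ad ℂ _ X)) from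
    by rw [LieModule.traceForm_apply_apply]; rfl]
  rw [LinearMap.trace_eq_matrix_trace ℂ slBasis', Matrix.trace_fin_three]
  have hentry : ∀ i j : Fin 3, (LinearMap.toMatrix slBasis' slBasis'
      ((LieAlgebra.ad ℂ _ Y) ∘ₗ (LieAlgebra.ad ℂ _ X))) i j
      = slEquiv' ⁅Y, ⁅X, slBasis' j⁆⁆ i := by
    intro i j
    rw [LinearMap.toMatrix_apply]
    simp [slBasis', Module.Basis.ofEquivFun_repr_apply]
  have hb : ∀ j : Fin 3, ((slBasis' j : ↥(sl (Fin 2) ℂ)) : Matrix (Fin 2) (Fin 2) ℂ)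
      = !![(Pi.single j (1:ℂ) : Fin 3 → ℂ) 0, (Pi.single j (1:ℂ) : Fin 3 → ℂ) 1;
           (Pi.single j (1:ℂ) : Fin 3 → ℂ) 2, -((Pi.single j (1:ℂ) : Fin 3 → ℂ) 0)] := by
    intro j
    simp [slBasis', Module.Basis.ofEquivFun, slEquiv']
  have hcoe : ∀ (a b : ↥(sl (Fin 2) ℂ)), ((⁅a, b⁆ : ↥(sl (Fin 2) ℂ)) : Matrix (Fin 2) (Fin 2) ℂ)
      = a.val * b.val - b.val * a.val := fun a b => rfl
  have hval : ∀ j : Fin 3, ∀ i : Fin 3, slEquiv' ⁅Y, ⁅X, slBasis' j⁆⁆ i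
      = ![ (⁅Y, ⁅X, slBasis' j⁆⁆ : ↥(sl (Fin 2) ℂ)).val 0 0,
           (⁅Y, ⁅X, slBasis' j⁆⁆ : ↥(sl (Fin 2) ℂ)).val 0 1,
           (⁅Y, ⁅X, slBasis' j⁆⁆ : ↥(sl (Fin 2) ℂ)).val 1 0] i := fun j i => rfl
  rw [hentry, hentry, hentry, hval, hval, hval]
  simp only [LieSubalgebra.coe_bracket, hcoe, hb, hX, hY]
  norm_num [Matrix.mul_fin_two]
  change (2:ℂ) + 2 = 4
  norm_num

/-- The bilinear pairing `p ⊗ Y ↦ K(H, Y) • p`. -/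
noncomputable def slPair (H : ↥(sl (Fin 2) ℂ)) :
    (LaurentPolynomial ℂ) ⊗[ℂ] ↥(sl (Fin 2) ℂ) →ₗ[ℂ] LaurentPolynomial ℂ :=
  TensorProduct.lift (LinearMap.mk₂ ℂ
    (fun p Y => (killingForm ℂ ↥(sl (Fin 2) ℂ) H Y) • p)
    (fun p q Y => smul_add _ p q)
    (fun c p Y => smul_comm _ c p)
    (fun p Y Z => by
      show (killingForm ℂ ↥(sl (Fin 2) ℂ) H) (Y + Z) • p = _
      rw [map_add, add_smul])
    (fun c p Y => by
      show (killingForm ℂ ↥(sl (Fin 2) ℂ) H) (c • Y) • p = _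
      rw [map_smul, smul_eq_mul, mul_smul]))

noncomputable def coeffL (k : ℤ) : LaurentPolynomial ℂ →ₗ[ℂ] ℂ :=
  { toFun := fun p => p.coeff k, map_add' := fun _ _ => rfl, map_smul' := fun _ _ => rfl }

lemma coeffL_T (k a : ℤ) : coeffL k (T a : LaurentPolynomial ℂ) = if a = k then 1 else 0 := by
  show (Finsupp.single a (1:ℂ)) k = _
  rw [Finsupp.single_apply]

lemma slPair_tmul (H : ↥(sl (Fin 2) ℂ)) (p : LaurentPolynomial ℂ) (Y : ↥(sl (Fin 2) ℂ)) :
    slPair H (p ⊗ₜ[ℂ] Y) = (killingForm ℂ ↥(sl (Fin 2) ℂ) H Y) • p := rfl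

end Aux

theorem statement4
    (Kℒ : (LaurentPolynomial ℂ) ⊗[ℂ] ↥(LieAlgebra.SpecialLinear.sl (Fin 2) ℂ) →ₗ[ℂ]
          (LaurentPolynomial ℂ) ⊗[ℂ] ↥(LieAlgebra.SpecialLinear.sl (Fin 2) ℂ) →ₗ[ℂ] ℂ)
    (hKℒ : ∀ (n m : ℤ) (X Y : ↥(LieAlgebra.SpecialLinear.sl (Fin 2) ℂ)),
      Kℒ (T n ⊗ₜ[ℂ] X) (T m ⊗ₜ[ℂ] Y)
        = if n + m = 0 then killingForm ℂ ↥(LieAlgebra.SpecialLinear.sl (Fin 2) ℂ) X Y else 0)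
    (H₀ X₀ Y₀ : ↥(LieAlgebra.SpecialLinear.sl (Fin 2) ℂ))
    (hH₀ : (H₀ : Matrix (Fin 2) (Fin 2) ℂ) = !![1, 0; 0, -1])
    (hX₀ : (X₀ : Matrix (Fin 2) (Fin 2) ℂ) = !![0, 1; 0, 0])
    (hY₀ : (Y₀ : Matrix (Fin 2) (Fin 2) ℂ) = !![0, 0; 1, 0])
    (φ : (LaurentPolynomial ℂ) ⊗[ℂ] ↥(LieAlgebra.SpecialLinear.sl (Fin 2) ℂ) →ₗ[ℂ] ℂ)
    (hφ : ∀ (n : ℤ) (X : ↥(LieAlgebra.SpecialLinear.sl (Fin 2) ℂ)),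
      φ (T n ⊗ₜ[ℂ] X) = killingForm ℂ ↥(LieAlgebra.SpecialLinear.sl (Fin 2) ℂ) Y₀ X) :
    (¬ ∃ Z : (LaurentPolynomial ℂ) ⊗[ℂ] ↥(LieAlgebra.SpecialLinear.sl (Fin 2) ℂ),
        ∀ n : ℤ, Kℒ (T n ⊗ₜ[ℂ] H₀) Z
          = φ ⁅(T n ⊗ₜ[ℂ] H₀ : (LaurentPolynomial ℂ) ⊗[ℂ] ↥(LieAlgebra.SpecialLinear.sl (Fin 2) ℂ)),
              ((1 : LaurentPolynomial ℂ) ⊗ₜ[ℂ] X₀)⁆)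
    ∧ (¬ ∃ Φ : ((LaurentPolynomial ℂ) ⊗[ℂ] ↥(LieAlgebra.SpecialLinear.sl (Fin 2) ℂ)) ⊗[ℂ]
            (((LaurentPolynomial ℂ) ⊗[ℂ] ↥(LieAlgebra.SpecialLinear.sl (Fin 2) ℂ)) →ₗ[ℂ] ℂ)
            →ₗ[ℂ] (LaurentPolynomial ℂ) ⊗[ℂ] ↥(LieAlgebra.SpecialLinear.sl (Fin 2) ℂ),
        ∀ (a v : (LaurentPolynomial ℂ) ⊗[ℂ] ↥(LieAlgebra.SpecialLinear.sl (Fin 2) ℂ))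
          (ψ : ((LaurentPolynomial ℂ) ⊗[ℂ] ↥(LieAlgebra.SpecialLinear.sl (Fin 2) ℂ)) →ₗ[ℂ] ℂ),
          Kℒ a (Φ (v ⊗ₜ[ℂ] ψ)) = ψ ⁅a, v⁆) := by
  -- the bracket ⁅H₀, X₀⁆ = 2 • X₀
  have hbrk : (⁅H₀, X₀⁆ : ↥(LieAlgebra.SpecialLinear.sl (Fin 2) ℂ)) = (2 : ℂ) • X₀ := by
    apply Subtype.ext
    have h1 : ((⁅H₀, X₀⁆ : ↥(LieAlgebra.SpecialLinear.sl (Fin 2) ℂ)) : Matrix (Fin 2) (Fin 2) ℂ)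
        = (H₀ : Matrix (Fin 2) (Fin 2) ℂ) * X₀ - (X₀ : Matrix (Fin 2) (Fin 2) ℂ) * H₀ := rfl
    have h2 : (((2 : ℂ) • X₀ : ↥(LieAlgebra.SpecialLinear.sl (Fin 2) ℂ)) : Matrix (Fin 2) (Fin 2) ℂ)
        = (2 : ℂ) • (X₀ : Matrix (Fin 2) (Fin 2) ℂ) := rfl
    rw [h1, h2, hH₀, hX₀]
    norm_num [Matrix.mul_fin_two]
    refine ⟨?_, ?_⟩ <;> funext i <;> exact i.elim0
  -- the value φ ⁅Tⁿ ⊗ H₀, 1 ⊗ X₀⁆ = 8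
  have hphi : ∀ n : ℤ,
      φ ⁅(T n ⊗ₜ[ℂ] H₀ : (LaurentPolynomial ℂ) ⊗[ℂ] ↥(LieAlgebra.SpecialLinear.sl (Fin 2) ℂ)), ((1 : LaurentPolynomial ℂ) ⊗ₜ[ℂ] X₀)⁆
        = 8 := by
    intro n
    rw [LieAlgebra.ExtendScalars.bracket_tmul, mul_one, hbrk, hφ, map_smul, smul_eq_mul,
      killing_val X₀ Y₀ hX₀ hY₀]
    norm_num
  -- key identity : Kℒ (Tⁿ ⊗ H₀) Z = coefficient of (slPair H₀ Z) at -n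
  have key : ∀ (n : ℤ) (Z : (LaurentPolynomial ℂ) ⊗[ℂ] ↥(LieAlgebra.SpecialLinear.sl (Fin 2) ℂ)),
      Kℒ (T n ⊗ₜ[ℂ] H₀) Z = coeffL (-n) (slPair H₀ Z) := by
    intro n Z
    have : Kℒ (T n ⊗ₜ[ℂ] H₀) = coeffL (-n) ∘ₗ slPair H₀ := by
      apply TensorProduct.ext'
      intro p Y
      rw [LinearMap.comp_apply]
      induction p using AddMonoidAlgebra.induction_linear with
      | zero => simp [TensorProduct.zero_tmul]
      | add f g hf hg =>
          rw [TensorProduct.add_tmul, map_add, map_add, map_add, hf, hg]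
      | single a b =>
          have hs : (AddMonoidAlgebra.single a b : LaurentPolynomial ℂ) = b • T a := by
            rw [T]; rw [AddMonoidAlgebra.smul_single']; rw [mul_one]
          rw [hs, ← TensorProduct.smul_tmul', map_smul, map_smul, map_smul, hKℒ,
            slPair_tmul, map_smul, coeffL_T, smul_eq_mul, smul_eq_mul, smul_eq_mul]
          by_cases h : n + a = 0
          · have ha : a = -n := by omega
            rw [if_pos h, if_pos ha, mul_one]
          · have ha : ¬ (a = -n) := by omega
            rw [if_neg h, if_neg ha, mul_zero, mul_zero, mul_zero]
    rw [this, LinearMap.comp_apply]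
  have main : ¬ ∃ Z : (LaurentPolynomial ℂ) ⊗[ℂ] ↥(LieAlgebra.SpecialLinear.sl (Fin 2) ℂ),
      ∀ n : ℤ, Kℒ (T n ⊗ₜ[ℂ] H₀) Z
        = φ ⁅(T n ⊗ₜ[ℂ] H₀ : (LaurentPolynomial ℂ) ⊗[ℂ] ↥(LieAlgebra.SpecialLinear.sl (Fin 2) ℂ)),
            ((1 : LaurentPolynomial ℂ) ⊗ₜ[ℂ] X₀)⁆ := by
    rintro ⟨Z, hZ⟩
    obtain ⟨m, hm⟩ := Infinite.exists_notMem_finset (slPair H₀ Z).coeff.support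
    have h0 : coeffL m (slPair H₀ Z) = 0 := by
      show (slPair H₀ Z).coeff m = 0
      exact Finsupp.notMem_support_iff.mp hm
    have := hZ (-m)
    rw [key, hphi, neg_neg, h0] at this
    norm_num at this
  refine ⟨main, ?_⟩
  rintro ⟨Φ, hΦ⟩
  exact main ⟨Φ (((1 : LaurentPolynomial ℂ) ⊗ₜ[ℂ] X₀) ⊗ₜ[ℂ] φ),
    fun n => hΦ (T n ⊗ₜ[ℂ] H₀) ((1 : LaurentPolynomial ℂ) ⊗ₜ[ℂ] X₀) φ⟩
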